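/- arXiv:1809.08830 — 3 statements merged into one kernel-verified Lean document; each statement's English description precedes it below -/
import Mathlib

section
/- Let γ ∈ ℝ, let D ∈ ℝ^{d×d} be symmetric positive semidefinite with D ≠ 0, and let Σ ∈ ℝ^{d×d} be symmetric positive definite. If γ I_d − D is positive definite, then the supremum of ⟨D, S⟩ − γ·Tr(S − 2(Σ^{1/2} S Σ^{1/2})^{1/2}) over all symmetric positive semidefinite matrices S ∈ ℝ^{d×d} equals γ²·Tr((γ I_d − D)^{-1} Σ). -/
set_option maxHeartbeats 1000000


open Matrix

-- `msqrt M` is the unique symmetric PSD square root of a symmetric PSD matrix `M` (else `0`).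
open Classical in
noncomputable def msqrt {ι : Type*} [Fintype ι] [DecidableEq ι] (M : Matrix ι ι ℝ) : Matrix ι ι ℝ :=
  if h : M.PosSemidef then
    (h.1.eigenvectorUnitary : Matrix ι ι ℝ) * diagonal ((RCLike.ofReal : ℝ → ℝ) ∘ Real.sqrt ∘ h.1.eigenvalues) *
      (star h.1.eigenvectorUnitary : Matrix ι ι ℝ) else 0

/-- The objective `S ↦ ⟨D, S⟩ − γ·Tr(S − 2(Σ^{1/2} S Σ^{1/2})^{1/2})`. -/
noncomputable def obj {d : ℕ} (γ : ℝ) (D Sg S : Matrix (Fin d) (Fin d) ℝ) : ℝ :=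
  (Dᵀ * S).trace - γ * (S - (2:ℝ) • msqrt (msqrt Sg * S * msqrt Sg)).trace


open scoped MatrixOrder in
lemma msqrt_eq_cfc {d : ℕ} {M : Matrix (Fin d) (Fin d) ℝ} (hM : M.PosSemidef) :
    msqrt M = CFC.sqrt M := by
  rw [CFC.sqrt_eq_cfc, cfc_nnreal_eq_real _ M hM.nonneg, hM.1.cfc_eq, IsHermitian.cfc,
    Unitary.conjStarAlgAut_apply, msqrt, dif_pos hM]
  congr 3
  funext i
  simp [Real.coe_sqrt, Real.coe_toNNReal', Real.sqrt_eq_zero', max_eq_left (hM.eigenvalues_nonneg i)]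

open scoped MatrixOrder in
lemma msqrt_psd {d : ℕ} {M : Matrix (Fin d) (Fin d) ℝ} (hM : M.PosSemidef) :
    (msqrt M).PosSemidef := by
  rw [msqrt_eq_cfc hM]
  exact (CFC.sqrt_nonneg M).posSemidef

open scoped MatrixOrder in
lemma msqrt_mul_self' {d : ℕ} {M : Matrix (Fin d) (Fin d) ℝ} (hM : M.PosSemidef) :
    msqrt M * msqrt M = M := by
  rw [msqrt_eq_cfc hM]
  exact CFC.sqrt_mul_sqrt_self M hM.nonneg

open scoped MatrixOrder in
lemma msqrt_sq_eq {d : ℕ} {A : Matrix (Fin d) (Fin d) ℝ} (hA : A.PosSemidef) :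
    msqrt (A ^ 2) = A := by
  rw [msqrt_eq_cfc (hA.pow 2)]
  exact CFC.sqrt_sq A hA.nonneg

lemma psd_trace_nonneg {d : ℕ} {A : Matrix (Fin d) (Fin d) ℝ} (hA : A.PosSemidef) :
    0 ≤ A.trace := by
  rw [Matrix.trace]
  refine Finset.sum_nonneg fun i _ => ?_
  have := hA.dotProduct_mulVec_nonneg (Pi.single i 1)
  simpa [Matrix.diag] using this

lemma psd_smul {d : ℕ} {A : Matrix (Fin d) (Fin d) ℝ} {c : ℝ} (hc : 0 ≤ c)
    (hA : A.PosSemidef) : (c • A).PosSemidef := by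
  refine posSemidef_iff_dotProduct_mulVec.mpr ⟨?_, fun x => ?_⟩
  · unfold Matrix.IsHermitian
    rw [conjTranspose_smul, hA.1]
    simp
  · rw [smul_mulVec, dotProduct_smul]
    exact mul_nonneg hc (hA.dotProduct_mulVec_nonneg x)

/-- If `γ I − D ≻ 0`, the supremum of `⟨D,S⟩ − γ·Tr(S − 2(Σ^{1/2} S Σ^{1/2})^{1/2})`
over all symmetric positive semidefinite `S` equals `γ²·Tr((γ I − D)⁻¹ Σ)`. -/
theorem stmt0 {d : ℕ} (γ : ℝ) (D Sg : Matrix (Fin d) (Fin d) ℝ)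
    (hD : D.PosSemidef) (hD0 : D ≠ 0) (hSg : Sg.PosDef)
    (hγ : (γ • (1 : Matrix (Fin d) (Fin d) ℝ) - D).PosDef) :
    IsLUB { r : ℝ | ∃ S : Matrix (Fin d) (Fin d) ℝ, S.PosSemidef ∧ r = obj γ D Sg S }
      (γ ^ 2 * ((γ • (1 : Matrix (Fin d) (Fin d) ℝ) - D)⁻¹ * Sg).trace) := by
  classical
  set M : Matrix (Fin d) (Fin d) ℝ := γ • (1 : Matrix (Fin d) (Fin d) ℝ) - D with hMdef
  -- γ > 0
  obtain ⟨x, hx⟩ : ∃ x : Fin d → ℝ, D *ᵥ x ≠ 0 := by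
    by_contra h
    push_neg at h
    apply hD0
    ext i j
    have := congrFun (h (Pi.single j 1)) i
    simpa [mulVec_single] using this
  have hxne : x ≠ 0 := fun h => hx (by simp [h])
  have hDx : 0 < star x ⬝ᵥ D *ᵥ x := by
    rcases (hD.dotProduct_mulVec_nonneg x).lt_or_eq with h | h
    · exact h
    · exact absurd (hD.dotProduct_mulVec_zero_iff x |>.mp h.symm) hx
  have hγpos : 0 < γ := by
    have h1 := hγ.dotProduct_mulVec_pos hxne
    have h2 : star x ⬝ᵥ M *ᵥ x = γ * (star x ⬝ᵥ x) - star x ⬝ᵥ D *ᵥ x := by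
      simp [hMdef, sub_mulVec, dotProduct_sub, smul_mulVec, dotProduct_smul,
        smul_eq_mul]
    have hxx : 0 < star x ⬝ᵥ x := dotProduct_star_self_pos_iff.mpr hxne
    nlinarith [h1, h2, hDx, hxx]
  -- square root R of Sg
  set R : Matrix (Fin d) (Fin d) ℝ := msqrt Sg with hRdef
  have hmsqSg : msqrt Sg = R := hRdef.symm
  have hR : R.PosSemidef := msqrt_psd hSg.posSemidef
  have hRR : R * R = Sg := msqrt_mul_self' hSg.posSemidef
  have hRH : Rᴴ = R := hR.1
  have hRdet : IsUnit R.det := by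
    have h : R.det * R.det = Sg.det := by rw [← det_mul, hRR]
    refine isUnit_iff_ne_zero.mpr fun h0 => ?_
    rw [h0, mul_zero] at h
    exact hSg.det_pos.ne' h.symm
  have hMH : Mᴴ = M := hγ.isHermitian
  have hMdet : IsUnit M.det := (Matrix.isUnit_iff_isUnit_det M).mp hγ.isUnit
  have hMiH : (M⁻¹)ᴴ = M⁻¹ := hγ.inv.isHermitian
  set N : Matrix (Fin d) (Fin d) ℝ := R⁻¹ * M * R⁻¹ with hNdef
  set N' : Matrix (Fin d) (Fin d) ℝ := R * M⁻¹ * R with hN'def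
  have hRiH : (R⁻¹)ᴴ = R⁻¹ := by rw [conjTranspose_nonsing_inv, hRH]
  have hNps : N.PosSemidef := by
    have := hγ.posSemidef.mul_mul_conjTranspose_same R⁻¹
    rwa [hRiH] at this
  have hN'ps : N'.PosSemidef := by
    have := hγ.inv.posSemidef.mul_mul_conjTranspose_same R
    rwa [hRH] at this
  have hN'H : N'ᴴ = N' := hN'ps.1
  have hNN' : N * N' = 1 := by
    simp only [hNdef, hN'def, Matrix.mul_assoc]
    rw [nonsing_inv_mul_cancel_left _ _ hRdet, mul_nonsing_inv_cancel_left _ _ hMdet,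
      nonsing_inv_mul R hRdet]
  have hN'N : N' * N = 1 := by
    simp only [hNdef, hN'def, Matrix.mul_assoc]
    rw [mul_nonsing_inv_cancel_left _ _ hRdet, nonsing_inv_mul_cancel_left _ _ hMdet,
      mul_nonsing_inv R hRdet]
  have htrN' : N'.trace = (M⁻¹ * Sg).trace := by
    rw [hN'def, Matrix.mul_assoc, trace_mul_comm, Matrix.mul_assoc, hRR]
  have hDT : Dᵀ = D := by
    rw [← conjTranspose_eq_transpose_of_trivial, hD.1]
  -- objective rewrite helper
  have hobj : ∀ S : Matrix (Fin d) (Fin d) ℝ, S.PosSemidef →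
      obj γ D Sg S = -(M * S).trace + 2 * γ * (msqrt (R * S * R)).trace := by
    intro S hS
    have hMS : (M * S).trace = γ * S.trace - (D * S).trace := by
      rw [hMdef, sub_mul, trace_sub, smul_mul_assoc, Matrix.one_mul, trace_smul, smul_eq_mul]
    rw [obj, hmsqSg, hDT, trace_sub, trace_smul, smul_eq_mul, hMS]
    ring
  constructor
  · -- upper bound
    rintro r ⟨S, hS, rfl⟩
    have hP : (R * S * R).PosSemidef := by
      have := hS.mul_mul_conjTranspose_same R
      rwa [hRH] at this
    set Q : Matrix (Fin d) (Fin d) ℝ := msqrt (R * S * R) with hQdef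
    have hmsqP : msqrt (R * S * R) = Q := hQdef.symm
    have hQ : Q.PosSemidef := msqrt_psd hP
    have hQQ : Q * Q = R * S * R := msqrt_mul_self' hP
    have hQH : Qᴴ = Q := hQ.1
    -- trace identity
    have htrMS : (N * (Q * Q)).trace = (M * S).trace := by
      rw [hQQ, hNdef]
      rw [show R⁻¹ * M * R⁻¹ * (R * S * R) = R⁻¹ * (M * (R⁻¹ * (R * (S * R)))) by
        simp only [Matrix.mul_assoc]]
      rw [nonsing_inv_mul_cancel_left _ _ hRdet, trace_mul_comm,
        show M * (S * R) * R⁻¹ = M * (S * (R * R⁻¹)) by simp only [Matrix.mul_assoc],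
        mul_nonsing_inv R hRdet, Matrix.mul_one]
    -- key psd inequality
    set Y : Matrix (Fin d) (Fin d) ℝ := Q - γ • N' with hYdef
    have hYH : Yᴴ = Y := by
      rw [hYdef, conjTranspose_sub, conjTranspose_smul, hQH, hN'H]
      simp
    have hexp : Yᴴ * N * Y = Q * N * Q - (2 * γ) • Q + (γ ^ 2) • N' := by
      rw [hYH, hYdef]
      have e1 : (Q - γ • N') * N = Q * N - γ • (1 : Matrix (Fin d) (Fin d) ℝ) := by
        rw [sub_mul, smul_mul_assoc, hN'N]
      rw [e1, sub_mul, mul_sub, mul_sub]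
      simp only [smul_mul_assoc, mul_smul_comm, Matrix.one_mul, Matrix.mul_one]
      rw [show Q * N * N' = Q * (N * N') from Matrix.mul_assoc Q N N', hNN', Matrix.mul_one]
      module
    have hkey : 0 ≤ (Q * N * Q).trace - (2 * γ) * Q.trace + γ ^ 2 * N'.trace := by
      have h1 := psd_trace_nonneg (hNps.conjTranspose_mul_mul_same Y)
      rw [hexp, trace_add, trace_sub, trace_smul, trace_smul, smul_eq_mul, smul_eq_mul] at h1
      linarith
    have htrQNQ : (Q * N * Q).trace = (N * (Q * Q)).trace := by
      rw [Matrix.mul_assoc, trace_mul_comm, Matrix.mul_assoc]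
    rw [hobj S hS, hmsqP]
    rw [htrQNQ, htrMS, htrN'] at hkey
    linarith
  · -- least upper bound: the value is attained
    rintro v hv
    set S : Matrix (Fin d) (Fin d) ℝ := (γ ^ 2) • (M⁻¹ * Sg * M⁻¹) with hSdef
    have hS : S.PosSemidef := by
      refine psd_smul (sq_nonneg γ) ?_
      have := hSg.posSemidef.mul_mul_conjTranspose_same M⁻¹
      rwa [hMiH] at this
    have hmid : R * (M⁻¹ * Sg * M⁻¹) * R = (R * M⁻¹ * R) ^ 2 := by
      rw [pow_two,
        show R * M⁻¹ * R * (R * M⁻¹ * R) = R * (M⁻¹ * ((R * R) * (M⁻¹ * R))) by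
          simp only [Matrix.mul_assoc], hRR]
      simp only [Matrix.mul_assoc]
    have hRS : R * S * R = (γ • (R * M⁻¹ * R)) ^ 2 := by
      rw [hSdef, smul_pow, mul_smul_comm, smul_mul_assoc, hmid]
    have hgRN : (γ • (R * M⁻¹ * R)).PosSemidef := psd_smul hγpos.le hN'ps
    have hmsq2 : msqrt (R * S * R) = γ • (R * M⁻¹ * R) := by
      rw [hRS]
      exact msqrt_sq_eq hgRN
    have htrMS2 : (M * S).trace = γ ^ 2 * (M⁻¹ * Sg).trace := by
      rw [hSdef, mul_smul_comm, trace_smul, smul_eq_mul,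
        show M * (M⁻¹ * Sg * M⁻¹) = M * (M⁻¹ * (Sg * M⁻¹)) by simp only [Matrix.mul_assoc],
        mul_nonsing_inv_cancel_left _ _ hMdet, trace_mul_comm]
    have htrQ : (γ • (R * M⁻¹ * R)).trace = γ * (M⁻¹ * Sg).trace := by
      rw [trace_smul, smul_eq_mul, ← hN'def, htrN']
    have hval : obj γ D Sg S = γ ^ 2 * (M⁻¹ * Sg).trace := by
      rw [hobj S hS, hmsq2, htrMS2, htrQ]
      ring
    exact hv ⟨S, hS, hval.symm⟩
end

section
/- Let γ ∈ ℝ, let D ∈ ℝ^{d×d} be symmetric positive semidefinite with D ≠ 0, and let Σ ∈ ℝ^{d×d} be symmetric positive definite. If γ I_d − D is positive definite, then S⋆ = γ² (γ I_d − D)^{-1} Σ (γ I_d − D)^{-1} is the unique maximizer of the function S ↦ ⟨D, S⟩ − γ·Tr(S − 2(Σ^{1/2} S Σ^{1/2})^{1/2}) over the set of symmetric positive semidefinite matrices S ∈ ℝ^{d×d}. -/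
open Matrix

open scoped MatrixOrder in
lemma aux_msqrt_eq_sqrt {d : ℕ} {M : Matrix (Fin d) (Fin d) ℝ} (h : M.PosSemidef) :
    msqrt M = CFC.sqrt M := by
  rw [CFC.sqrt_eq_real_sqrt M (nonneg_iff_posSemidef.mpr h), cfcₙ_eq_cfc, h.1.cfc_eq,
    msqrt, dif_pos h]
  rfl

lemma aux_trace_transpose_mul_self_nonneg {d : ℕ} (A : Matrix (Fin d) (Fin d) ℝ) :
    0 ≤ (Aᵀ * A).trace := by
  rw [Matrix.trace]
  refine Finset.sum_nonneg fun j _ => ?_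
  simp only [diag_apply, mul_apply, transpose_apply]
  exact Finset.sum_nonneg fun i _ => mul_self_nonneg _

lemma aux_eq_zero_of_trace_transpose_mul_self {d : ℕ} (A : Matrix (Fin d) (Fin d) ℝ)
    (h : (Aᵀ * A).trace = 0) : A = 0 := by
  rw [Matrix.trace] at h
  have h2 : ∀ j ∈ Finset.univ, (0:ℝ) ≤ ((Aᵀ * A).diag j) := by
    intro j _
    simp only [diag_apply, mul_apply, transpose_apply]
    exact Finset.sum_nonneg fun i _ => mul_self_nonneg _
  have h3 := (Finset.sum_eq_zero_iff_of_nonneg h2).mp h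
  ext i j
  have hj := h3 j (Finset.mem_univ j)
  simp only [diag_apply, mul_apply, transpose_apply] at hj
  have h4 : ∀ i ∈ Finset.univ, (0:ℝ) ≤ A i j * A i j := fun i _ => mul_self_nonneg _
  have := (Finset.sum_eq_zero_iff_of_nonneg h4).mp hj i (Finset.mem_univ i)
  simpa [mul_self_eq_zero] using this

open scoped MatrixOrder in
lemma aux_msqrt_posSemidef {d : ℕ} {M : Matrix (Fin d) (Fin d) ℝ} (h : M.PosSemidef) :
    (msqrt M).PosSemidef := by
  rw [aux_msqrt_eq_sqrt h]; exact nonneg_iff_posSemidef.mp (CFC.sqrt_nonneg M)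

open scoped MatrixOrder in
lemma aux_msqrt_mul_self {d : ℕ} {M : Matrix (Fin d) (Fin d) ℝ} (h : M.PosSemidef) :
    msqrt M * msqrt M = M := by
  rw [aux_msqrt_eq_sqrt h]; exact CFC.sqrt_mul_sqrt_self M (nonneg_iff_posSemidef.mpr h)

open scoped MatrixOrder in
lemma aux_msqrt_eq {d : ℕ} {M B : Matrix (Fin d) (Fin d) ℝ} (h : M.PosSemidef)
    (hB : B.PosSemidef) (hBM : B * B = M) : msqrt M = B := by
  rw [aux_msqrt_eq_sqrt h]
  exact CFC.sqrt_unique hBM (nonneg_iff_posSemidef.mpr hB)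

lemma aux_msqrt_isUnit_det {d : ℕ} {M : Matrix (Fin d) (Fin d) ℝ} (h : M.PosDef) :
    IsUnit (msqrt M).det := by
  have h2 : (msqrt M).det * (msqrt M).det = M.det := by
    rw [← det_mul, aux_msqrt_mul_self h.posSemidef]
  have := h.det_pos
  refine isUnit_iff_ne_zero.mpr fun h0 => ?_
  rw [h0, mul_zero] at h2
  exact (by linarith : ¬ (0:ℝ) < M.det) this

lemma aux_smul_posSemidef {d : ℕ} {M : Matrix (Fin d) (Fin d) ℝ} {c : ℝ} (hc : 0 ≤ c)
    (h : M.PosSemidef) : (c • M).PosSemidef := by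
  refine posSemidef_iff_dotProduct_mulVec.mpr ⟨?_, fun x => ?_⟩
  · have := h.1
    rw [IsHermitian, conjTranspose_smul] at *
    rw [this]
    norm_num
  · rw [smul_mulVec, dotProduct_smul, smul_eq_mul]
    exact mul_nonneg hc (h.dotProduct_mulVec_nonneg x)

/-- If `γ I − D ≻ 0`, then `S⋆ = γ² (γ I − D)⁻¹ Σ (γ I − D)⁻¹` is the unique maximizer of
`S ↦ ⟨D,S⟩ − γ·Tr(S − 2(Σ^{1/2} S Σ^{1/2})^{1/2})` over symmetric PSD matrices. -/
theorem stmt1 {d : ℕ} (γ : ℝ) (D Sg : Matrix (Fin d) (Fin d) ℝ)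
    (hD : D.PosSemidef) (hD0 : D ≠ 0) (hSg : Sg.PosDef)
    (hγ : (γ • (1 : Matrix (Fin d) (Fin d) ℝ) - D).PosDef) :
    (γ ^ 2 • ((γ • (1 : Matrix (Fin d) (Fin d) ℝ) - D)⁻¹ * Sg *
        (γ • (1 : Matrix (Fin d) (Fin d) ℝ) - D)⁻¹)).PosSemidef ∧
    (∀ S : Matrix (Fin d) (Fin d) ℝ, S.PosSemidef →
      obj γ D Sg S ≤ obj γ D Sg (γ ^ 2 • ((γ • (1 : Matrix (Fin d) (Fin d) ℝ) - D)⁻¹ * Sg *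
        (γ • (1 : Matrix (Fin d) (Fin d) ℝ) - D)⁻¹))) ∧
    (∀ S : Matrix (Fin d) (Fin d) ℝ, S.PosSemidef →
      obj γ D Sg S = obj γ D Sg (γ ^ 2 • ((γ • (1 : Matrix (Fin d) (Fin d) ℝ) - D)⁻¹ * Sg *
        (γ • (1 : Matrix (Fin d) (Fin d) ℝ) - D)⁻¹)) →
      S = γ ^ 2 • ((γ • (1 : Matrix (Fin d) (Fin d) ℝ) - D)⁻¹ * Sg *
        (γ • (1 : Matrix (Fin d) (Fin d) ℝ) - D)⁻¹)) := by
  set A : Matrix (Fin d) (Fin d) ℝ := γ • (1 : Matrix (Fin d) (Fin d) ℝ) - D with hAdef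
  set R : Matrix (Fin d) (Fin d) ℝ := msqrt Sg with hRdef
  -- basic facts
  have hne : Nonempty (Fin d) := by
    rcases Nat.eq_zero_or_pos d with h | h
    · subst h; exact absurd (Subsingleton.elim D 0) hD0
    · exact ⟨⟨0, h⟩⟩
  obtain ⟨i⟩ := hne
  have hγpos : 0 < γ := by
    have hx : (Pi.single i 1 : Fin d → ℝ) ≠ 0 := by
      intro h
      have := congrFun h i
      simp at this
    have h1 := hγ.dotProduct_mulVec_pos hx
    have h2 := hD.dotProduct_mulVec_nonneg (Pi.single i 1)
    have hstar : (star (Pi.single i 1 : Fin d → ℝ)) = Pi.single i 1 := by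
      simp
    rw [hstar] at h1 h2
    rw [sub_mulVec, dotProduct_sub, smul_mulVec, one_mulVec, dotProduct_smul] at h1
    have hdot : (Pi.single i 1 : Fin d → ℝ) ⬝ᵥ Pi.single i 1 = 1 := by
      simp [dotProduct, Pi.single_apply]
    rw [hdot] at h1
    simp only [smul_eq_mul, mul_one] at h1
    linarith
  have hA : A.PosDef := hγ
  have hAdet : IsUnit A.det := hA.det_pos.ne'.isUnit
  have hAinv : A⁻¹.PosDef := hA.inv
  have hAAinv : A * A⁻¹ = 1 := mul_nonsing_inv A hAdet
  have hAinvA : A⁻¹ * A = 1 := nonsing_inv_mul A hAdet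
  have hAinvH : A⁻¹ᴴ = A⁻¹ := hAinv.isHermitian
  have hRps : R.PosSemidef := aux_msqrt_posSemidef hSg.posSemidef
  have hRH : Rᴴ = R := hRps.1
  have hRR : R * R = Sg := aux_msqrt_mul_self hSg.posSemidef
  have hRdet : IsUnit R.det := aux_msqrt_isUnit_det hSg
  have hRinvR : R⁻¹ * R = 1 := nonsing_inv_mul R hRdet
  have hRRinv : R * R⁻¹ = 1 := mul_nonsing_inv R hRdet
  have hRinvH : R⁻¹ᴴ = R⁻¹ := by rw [conjTranspose_nonsing_inv, hRH]
  set Sstar : Matrix (Fin d) (Fin d) ℝ := γ ^ 2 • (A⁻¹ * Sg * A⁻¹) with hSstardef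
  set C : Matrix (Fin d) (Fin d) ℝ := γ • (R * A⁻¹ * R) with hCdef
  set B : Matrix (Fin d) (Fin d) ℝ := R⁻¹ * A * R⁻¹ with hBdef
  have hCps : C.PosSemidef := by
    apply aux_smul_posSemidef hγpos.le
    have := hAinv.posSemidef.mul_mul_conjTranspose_same R
    rwa [hRH] at this
  have hBps : B.PosSemidef := by
    have := hA.posSemidef.mul_mul_conjTranspose_same R⁻¹
    rwa [hRinvH] at this
  have hBdet : IsUnit B.det := by
    rw [hBdef, det_mul, det_mul]
    exact ((R.isUnit_nonsing_inv_det hRdet).mul hAdet).mul (R.isUnit_nonsing_inv_det hRdet)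
  have hBC : B * C = γ • 1 := by
    rw [hBdef, hCdef, mul_smul_comm]
    congr 1
    calc R⁻¹ * A * R⁻¹ * (R * A⁻¹ * R) = R⁻¹ * A * (R⁻¹ * R) * A⁻¹ * R := by
          simp only [Matrix.mul_assoc]
      _ = R⁻¹ * (A * A⁻¹) * R := by rw [hRinvR]; simp only [Matrix.mul_assoc, Matrix.mul_one]
      _ = 1 := by rw [hAAinv, Matrix.mul_one, hRinvR]
  have hCB : C * B = γ • 1 := by
    rw [hCdef, hBdef, smul_mul_assoc]
    congr 1
    calc R * A⁻¹ * R * (R⁻¹ * A * R⁻¹) = R * A⁻¹ * (R * R⁻¹) * A * R⁻¹ := by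
          simp only [Matrix.mul_assoc]
      _ = R * (A⁻¹ * A) * R⁻¹ := by rw [hRRinv]; simp only [Matrix.mul_assoc, Matrix.mul_one]
      _ = 1 := by rw [hAinvA, Matrix.mul_one, hRRinv]
  have hDT : Dᵀ = D := by
    rw [← conjTranspose_eq_transpose_of_trivial]; exact hD.1
  -- the key identity
  have key : ∀ S : Matrix (Fin d) (Fin d) ℝ, S.PosSemidef →
      obj γ D Sg S = γ * C.trace -
        ((msqrt (R * S * R) - C) * B * (msqrt (R * S * R) - C)).trace := by
    intro S hS
    set T : Matrix (Fin d) (Fin d) ℝ := msqrt (R * S * R) with hTdef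
    have hRSRps : (R * S * R).PosSemidef := by
      have := hS.mul_mul_conjTranspose_same R
      rwa [hRH] at this
    have hTT : T * T = R * S * R := aux_msqrt_mul_self hRSRps
    have hSrec : S = R⁻¹ * (T * T) * R⁻¹ := by
      rw [hTT]
      calc S = (R⁻¹ * R) * S * (R * R⁻¹) := by rw [hRinvR, hRRinv, Matrix.one_mul, Matrix.mul_one]
        _ = R⁻¹ * (R * S * R) * R⁻¹ := by simp only [Matrix.mul_assoc]
    have hAS : (A * S).trace = (B * (T * T)).trace := by
      conv_lhs => rw [hSrec]
      rw [hBdef]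
      rw [show A * (R⁻¹ * (T * T) * R⁻¹) = A * R⁻¹ * (T * T) * R⁻¹ by
        simp only [Matrix.mul_assoc]]
      rw [trace_mul_cycle]
      simp only [Matrix.mul_assoc]
    have hTBC : T * B * C = γ • T := by
      rw [Matrix.mul_assoc, hBC, mul_smul_comm, Matrix.mul_one]
    have hCBT : C * B * T = γ • T := by
      rw [hCB, smul_mul_assoc, Matrix.one_mul]
    have hCBC : C * B * C = γ • C := by
      rw [hCB, smul_mul_assoc, Matrix.one_mul]
    have expand : (T - C) * B * (T - C) = T * B * T - T * B * C - C * B * T + C * B * C := by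
      noncomm_ring
    have htrE : ((T - C) * B * (T - C)).trace
        = (B * (T * T)).trace - 2 * γ * T.trace + γ * C.trace := by
      rw [expand, hTBC, hCBT, hCBC, trace_add, trace_sub, trace_sub, trace_smul, trace_smul,
        trace_mul_cycle]
      simp only [smul_eq_mul, ← Matrix.mul_assoc, trace_mul_comm (T * T) B]
      ring
    have hobj : obj γ D Sg S = -(B * (T * T)).trace + 2 * γ * T.trace := by
      rw [obj, hDT, ← hTdef, trace_sub, trace_smul]
      have hDS : (D * S).trace - γ * S.trace = -(A * S).trace := by
        rw [hAdef, Matrix.sub_mul, trace_sub, smul_mul_assoc, Matrix.one_mul, trace_smul]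
        simp only [smul_eq_mul]
        ring
      rw [hAS] at hDS
      have : (D * S).trace = -(B * (T * T)).trace + γ * S.trace := by linarith
      rw [this]
      simp only [smul_eq_mul]
      ring
    rw [hobj, htrE]
    ring
  -- Sstar is PSD
  have hSstarPS : Sstar.PosSemidef := by
    apply aux_smul_posSemidef (sq_nonneg γ)
    have := hSg.posSemidef.mul_mul_conjTranspose_same A⁻¹
    rwa [hAinvH] at this
  -- the square root at Sstar is C
  have hRSstarR : R * Sstar * R = C * C := by
    rw [hSstardef, hCdef, smul_mul_assoc, mul_smul_comm, smul_mul_assoc, mul_smul_comm,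
      smul_smul, pow_two]
    congr 1
    calc R * (A⁻¹ * Sg * A⁻¹) * R = R * A⁻¹ * Sg * A⁻¹ * R := by simp only [Matrix.mul_assoc]
      _ = R * A⁻¹ * (R * R) * A⁻¹ * R := by rw [hRR]
      _ = R * A⁻¹ * R * (R * A⁻¹ * R) := by simp only [Matrix.mul_assoc]
  have hRSstarRps : (R * Sstar * R).PosSemidef := by
    have := hSstarPS.mul_mul_conjTranspose_same R
    rwa [hRH] at this
  have hTstar : msqrt (R * Sstar * R) = C := aux_msqrt_eq hRSstarRps hCps hRSstarR.symm
  have hobjstar : obj γ D Sg Sstar = γ * C.trace := by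
    rw [key Sstar hSstarPS, hTstar, sub_self, Matrix.zero_mul, Matrix.mul_zero, trace_zero,
      sub_zero]
  -- nonnegativity of the residual term, with the equality case
  have main : ∀ S : Matrix (Fin d) (Fin d) ℝ, S.PosSemidef →
      0 ≤ ((msqrt (R * S * R) - C) * B * (msqrt (R * S * R) - C)).trace ∧
      (((msqrt (R * S * R) - C) * B * (msqrt (R * S * R) - C)).trace = 0 →
        msqrt (R * S * R) = C) := by
    intro S hS
    have hRSRps : (R * S * R).PosSemidef := by
      have := hS.mul_mul_conjTranspose_same R
      rwa [hRH] at this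
    set X : Matrix (Fin d) (Fin d) ℝ := msqrt (R * S * R) - C with hXdef
    have hXT : Xᵀ = X := by
      rw [← conjTranspose_eq_transpose_of_trivial, hXdef, conjTranspose_sub,
        (aux_msqrt_posSemidef hRSRps).1, hCps.1]
    set P : Matrix (Fin d) (Fin d) ℝ := msqrt B with hPdef
    have hPT : Pᵀ = P := by
      rw [← conjTranspose_eq_transpose_of_trivial, hPdef, (aux_msqrt_posSemidef hBps).1]
    have hPP : P * P = B := aux_msqrt_mul_self hBps
    have hE : X * B * X = (P * X)ᵀ * (P * X) := by
      rw [transpose_mul, hXT, hPT, ← hPP]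
      simp only [Matrix.mul_assoc]
    constructor
    · rw [hE]
      exact aux_trace_transpose_mul_self_nonneg _
    · intro h0
      rw [hE] at h0
      have hPX : P * X = 0 := aux_eq_zero_of_trace_transpose_mul_self _ h0
      have hBX : B * X = 0 := by
        rw [← hPP, Matrix.mul_assoc, hPX, Matrix.mul_zero]
      have hX0 : X = 0 := by
        calc X = B⁻¹ * B * X := by rw [nonsing_inv_mul B hBdet, Matrix.one_mul]
          _ = B⁻¹ * (B * X) := by rw [Matrix.mul_assoc]
          _ = 0 := by rw [hBX, Matrix.mul_zero]
      have := sub_eq_zero.mp (hXdef ▸ hX0)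
      exact this
  refine ⟨hSstarPS, fun S hS => ?_, fun S hS heq => ?_⟩
  · rw [key S hS, hobjstar]
    linarith [(main S hS).1]
  · rw [key S hS, hobjstar] at heq
    have hE0 : ((msqrt (R * S * R) - C) * B * (msqrt (R * S * R) - C)).trace = 0 := by
      linarith
    have hT : msqrt (R * S * R) = C := (main S hS).2 hE0
    have hRSRps : (R * S * R).PosSemidef := by
      have := hS.mul_mul_conjTranspose_same R
      rwa [hRH] at this
    have h1 : R * S * R = R * Sstar * R := by
      rw [← aux_msqrt_mul_self hRSRps, hT, hRSstarR]
    have cancel : ∀ M : Matrix (Fin d) (Fin d) ℝ, R⁻¹ * (R * M * R) * R⁻¹ = M := by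
      intro M
      calc R⁻¹ * (R * M * R) * R⁻¹ = (R⁻¹ * R) * M * (R * R⁻¹) := by
            simp only [Matrix.mul_assoc]
        _ = M := by rw [hRinvR, hRRinv, Matrix.one_mul, Matrix.mul_one]
    calc S = R⁻¹ * (R * S * R) * R⁻¹ := (cancel S).symm
      _ = R⁻¹ * (R * Sstar * R) * R⁻¹ := by rw [h1]
      _ = Sstar := cancel Sstar
end

section
/- Let 0 < σ̲ ≤ σ̄ and let S ∈ ℝ^{d×d} be a symmetric matrix, partitioned into blocks, satisfying σ̲ I_d ⪯ S ⪯ σ̄ I_d. Then S_xy S_yy^{-1} S_yx ⪯ (σ̄ − σ̲) I_n. -/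
open Matrix

/-- The objective `f(S) = Tr(S_xx − S_xy S_yy⁻¹ S_yx)` of the convex reformulation. -/
noncomputable def fobj {n m : ℕ} (S : Matrix (Fin n ⊕ Fin m) (Fin n ⊕ Fin m) ℝ) : ℝ :=
  (S.toBlocks₁₁ - S.toBlocks₁₂ * S.toBlocks₂₂⁻¹ * S.toBlocks₂₁).trace

/-- The gradient matrix `D(G) = [I, −G]ᵀ[I, −G] = [[I, −G], [−Gᵀ, GᵀG]]`. -/
def Dmat {n m : ℕ} (G : Matrix (Fin n) (Fin m) ℝ) :
    Matrix (Fin n ⊕ Fin m) (Fin n ⊕ Fin m) ℝ :=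
  Matrix.fromBlocks 1 (-G) (-Gᵀ) (Gᵀ * G)

lemma posDef_smul_one {k : Type*} [Fintype k] [DecidableEq k] {c : ℝ} (hc : 0 < c) :
    (c • (1 : Matrix k k ℝ)).PosDef := by
  refine Matrix.PosDef.of_dotProduct_mulVec_pos ?_ ?_
  · ext i j
    simp [Matrix.one_apply, eq_comm]
  · intro x hx
    have h1 : (0 : ℝ) < star x ⬝ᵥ x := Matrix.dotProduct_star_self_pos_iff.mpr hx
    calc (0:ℝ) < c * (star x ⬝ᵥ x) := by positivity
    _ = star x ⬝ᵥ (c • (1 : Matrix k k ℝ)) *ᵥ x := by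
        rw [Matrix.smul_mulVec, Matrix.one_mulVec, dotProduct_smul, smul_eq_mul]

/-- If `σ̲ I ⪯ S ⪯ σ̄ I` with `0 < σ̲ ≤ σ̄`, then `S_xy S_yy⁻¹ S_yx ⪯ (σ̄ − σ̲) I_n`. -/
theorem stmt14 {n m : ℕ} [NeZero n] [NeZero m] (σl σu : ℝ) (hσl : 0 < σl) (hσ : σl ≤ σu)
    (S : Matrix (Fin n ⊕ Fin m) (Fin n ⊕ Fin m) ℝ) (hsym : S.IsSymm)
    (hlo : (S - σl • (1 : Matrix (Fin n ⊕ Fin m) (Fin n ⊕ Fin m) ℝ)).PosSemidef)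
    (hhi : (σu • (1 : Matrix (Fin n ⊕ Fin m) (Fin n ⊕ Fin m) ℝ) - S).PosSemidef) :
    ((σu - σl) • (1 : Matrix (Fin n) (Fin n) ℝ) -
      S.toBlocks₁₂ * S.toBlocks₂₂⁻¹ * S.toBlocks₂₁).PosSemidef := by
  -- S is positive definite
  have hSpd : S.PosDef := by
    have := Matrix.PosDef.posSemidef_add hlo (posDef_smul_one (k := Fin n ⊕ Fin m) hσl)
    simpa using this
  -- S_yy is positive definite
  have hyy : S.toBlocks₂₂.PosDef := by
    refine Matrix.PosDef.of_dotProduct_mulVec_pos ?_ ?_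
    · ext i j
      have := congrFun (congrFun hsym (Sum.inr j)) (Sum.inr i)
      simpa [Matrix.toBlocks₂₂, Matrix.transpose_apply, eq_comm] using this
    · intro v hv
      have hv' : (Sum.elim (0 : Fin n → ℝ) v) ≠ 0 := by
        intro h
        apply hv
        ext i
        exact congrFun h (Sum.inr i)
      have := hSpd.dotProduct_mulVec_pos hv'
      convert this using 1
      simp [dotProduct, Matrix.mulVec, Fintype.sum_sum_type, Matrix.toBlocks₂₂,
        dotProduct]
  have : Invertible S.toBlocks₂₂ := hyy.isUnit.invertible
  -- S_yx = S_xyᴴ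
  have h21 : S.toBlocks₂₁ = S.toBlocks₁₂ᴴ := by
    ext i j
    have := congrFun (congrFun hsym (Sum.inl j)) (Sum.inr i)
    simpa [Matrix.toBlocks₂₁, Matrix.toBlocks₁₂, Matrix.transpose_apply, eq_comm] using this
  -- the block matrix [[S_xx - σl I, S_xy],[S_yx, S_yy]] is PSD
  have hblk : (Matrix.fromBlocks (0 : Matrix (Fin n) (Fin n) ℝ) 0
      (0 : Matrix (Fin m) (Fin n) ℝ) (σl • 1)).PosSemidef := by
    have hpd : (σl • (1 : Matrix (Fin m) (Fin m) ℝ)).PosDef := posDef_smul_one hσl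
    have : Invertible (σl • (1 : Matrix (Fin m) (Fin m) ℝ)) := hpd.isUnit.invertible
    rw [show (0 : Matrix (Fin m) (Fin n) ℝ) = (0 : Matrix (Fin n) (Fin m) ℝ)ᴴ by simp]
    exact (Matrix.PosDef.fromBlocks₂₂ _ _ hpd).2
      (by simpa using (Matrix.PosSemidef.zero (n := Fin n) (R := ℝ)))
  have hM : (Matrix.fromBlocks (S.toBlocks₁₁ - σl • 1) S.toBlocks₁₂
      S.toBlocks₁₂ᴴ S.toBlocks₂₂).PosSemidef := by
    have key : Matrix.fromBlocks (S.toBlocks₁₁ - σl • 1) S.toBlocks₁₂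
        S.toBlocks₁₂ᴴ S.toBlocks₂₂
        = (S - σl • 1) + Matrix.fromBlocks 0 0 0 (σl • 1) := by
      rw [← h21]
      ext i j
      cases i <;> cases j <;>
        simp [Matrix.toBlocks₁₁, Matrix.toBlocks₁₂, Matrix.toBlocks₂₁, Matrix.toBlocks₂₂,
          Matrix.one_apply]
    rw [key]
    exact hlo.add hblk
  -- Schur complement bound
  have hSchur : ((S.toBlocks₁₁ - σl • 1) -
      S.toBlocks₁₂ * S.toBlocks₂₂⁻¹ * S.toBlocks₁₂ᴴ).PosSemidef :=
    (Matrix.PosDef.fromBlocks₂₂ _ _ hyy).1 hM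
  -- σu I - S_xx is PSD
  have hxx : ((σu • 1 : Matrix (Fin n) (Fin n) ℝ) - S.toBlocks₁₁).PosSemidef := by
    have := hhi.submatrix (Sum.inl : Fin n → Fin n ⊕ Fin m)
    convert this using 1
    ext i j
    by_cases h : i = j <;>
      simp [Matrix.toBlocks₁₁, Matrix.one_apply, h, Matrix.submatrix_apply]
  have key : (σu - σl) • (1 : Matrix (Fin n) (Fin n) ℝ) -
      S.toBlocks₁₂ * S.toBlocks₂₂⁻¹ * S.toBlocks₂₁
      = ((σu • 1 : Matrix (Fin n) (Fin n) ℝ) - S.toBlocks₁₁) +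
        ((S.toBlocks₁₁ - σl • 1) - S.toBlocks₁₂ * S.toBlocks₂₂⁻¹ * S.toBlocks₁₂ᴴ) := by
    rw [← h21, sub_smul]
    abel
  rw [key]
  exact hxx.add hSchur
end
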